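/- In a static validator set of size n partitioned into n/m disjoint groups each of size m, where m divides n and m < n - f_L, if in each 'world i' group P_i is honest and all other groups are adversarial, and the worlds are indistinguishable to a late-coming client, then any forensic protocol that always outputs at least one validator as adversarial must, in some world i*, output an honest validator (one from P_{i*}) with probability at least m/n. -/

import Mathlib

open Finset

/-- a static validator set of size `n` is partitioned into
`k = n/m` disjoint groups `P i`, each of size `m`.  A (possibly randomized)
forensic procedure is modeled by a finite sample space `Ω` with probability
mass `p` and an output map `F : Ω → Finset (Fin n)` which always outputs a
nonempty set of accused validators; the output distribution is identical
across the `k` indistinguishable worlds (in world `i` the honest validators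
are exactly `P i`).  Then in some world `i*` the forensic output blames an
honest validator (one from `P i*`) with probability at least `m / n`. -/
theorem forensic_blames_honest_with_prob
    (n m k : ℕ) (hm : 0 < m) (hk : 0 < k) (hn : n = k * m)
    (P : Fin k → Finset (Fin n))
    (hdisj : ∀ i j, i ≠ j → Disjoint (P i) (P j))
    (hcard : ∀ i, (P i).card = m)
    (hcover : ∀ v : Fin n, ∃ i, v ∈ P i)
    (Ω : Type) [Fintype Ω]
    (p : Ω → ℝ) (hp : ∀ ω, 0 ≤ p ω) (hsum : ∑ ω, p ω = 1)
    (F : Ω → Finset (Fin n)) (hne : ∀ ω, (F ω).Nonempty) :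
    ∃ i : Fin k,
      (m : ℝ) / (n : ℝ) ≤
        ∑ ω ∈ Finset.univ.filter (fun ω => (F ω ∩ P i).Nonempty), p ω := by
  classical
  by_contra h
  push_neg at h
  have key : (1:ℝ) ≤ ∑ i : Fin k,
      ∑ ω ∈ Finset.univ.filter (fun ω => (F ω ∩ P i).Nonempty), p ω := by
    calc (1:ℝ) = ∑ ω, p ω := hsum.symm
    _ ≤ ∑ ω, ∑ i : Fin k, (if (F ω ∩ P i).Nonempty then p ω else 0) := by
        apply Finset.sum_le_sum
        intro ω _
        obtain ⟨v, hv⟩ := hne ω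
        obtain ⟨i0, hi0⟩ := hcover v
        have hmem : (F ω ∩ P i0).Nonempty := ⟨v, Finset.mem_inter.mpr ⟨hv, hi0⟩⟩
        have := Finset.single_le_sum (f := fun i : Fin k => if (F ω ∩ P i).Nonempty then p ω else 0)
          (fun i _ => by split_ifs <;> simp [hp ω]) (Finset.mem_univ i0)
        simpa [hmem] using this
    _ = ∑ i : Fin k, ∑ ω ∈ Finset.univ.filter (fun ω => (F ω ∩ P i).Nonempty), p ω := by
        rw [Finset.sum_comm]
        simp [Finset.sum_filter]
  have hlt : ∑ i : Fin k,
      ∑ ω ∈ Finset.univ.filter (fun ω => (F ω ∩ P i).Nonempty), p ω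
      < ∑ i : Fin k, (m : ℝ) / (n : ℝ) := by
    apply Finset.sum_lt_sum_of_nonempty ⟨⟨0, hk⟩, Finset.mem_univ _⟩
    intro i _
    exact h i
  have hn' : (n : ℝ) = (k : ℝ) * (m : ℝ) := by exact_mod_cast congrArg Nat.cast hn
  rw [Finset.sum_const, Finset.card_univ, Fintype.card_fin, nsmul_eq_mul, hn'] at hlt
  have hkpos : (0:ℝ) < k := by exact_mod_cast hk
  have hmpos : (0:ℝ) < m := by exact_mod_cast hm
  have heq : (k:ℝ) * ((m:ℝ) / ((k:ℝ) * (m:ℝ))) = 1 := by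
    field_simp
  rw [heq] at hlt
  linarith
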